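/- Let m₁₁ > 0, m₂₁ ≥ 0, m₂₂ < 0, and let M be the 2×2 lower-triangular matrix with entries M₁₁ = m₁₁, M₁₂ = 0, M₂₁ = m₂₁, M₂₂ = m₂₂. Then for every v ∈ ℝ² with v₁ > 0, e^{−m₁₁ t} exp(tM) v converges as t → ∞ to v₁ · (1, m₂₁/(m₁₁ − m₂₂)); in particular the limit is a positive multiple of the eigenvector (1, m₂₁/(m₁₁ − m₂₂)) of M associated with the eigenvalue m₁₁. -/

import Mathlib

open MeasureTheory Set Filter Matrix

noncomputable section

/-- For the lower-triangular matrix `M = [[m₁₁, 0], [m₂₁, m₂₂]]` with `m₁₁ > 0`, `m₂₁ ≥ 0`,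
`m₂₂ < 0`, and any `v` with `v₁ > 0`, `e^{−m₁₁ t} exp(tM) v` converges as `t → ∞` to
`v₁ • (1, m₂₁/(m₁₁ − m₂₂))`, which is a positive multiple of the eigenvector
`(1, m₂₁/(m₁₁ − m₂₂))` of `M` for the eigenvalue `m₁₁`. -/
theorem matrix_exp_convergence
    (m11 m21 m22 : ℝ) (hm11 : 0 < m11) (hm21 : 0 ≤ m21) (hm22 : m22 < 0)
    (v : Fin 2 → ℝ) (hv : 0 < v 0) :
    Tendsto
      (fun t : ℝ => Real.exp (-m11 * t) •
        (NormedSpace.exp (t • (!![m11, 0; m21, m22] : Matrix (Fin 2) (Fin 2) ℝ))).mulVec v)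
      atTop (nhds (v 0 • ![1, m21 / (m11 - m22)])) ∧
    (!![m11, 0; m21, m22] : Matrix (Fin 2) (Fin 2) ℝ).mulVec ![1, m21 / (m11 - m22)]
      = m11 • ![1, m21 / (m11 - m22)] := by
  have hd : (0:ℝ) < m11 - m22 := by linarith
  have hd' : m11 - m22 ≠ 0 := ne_of_gt hd
  set k : ℝ := m21 / (m11 - m22) with hk
  have hkd : k * (m11 - m22) = m21 := by rw [hk]; exact div_mul_cancel₀ m21 hd'
  set P : Matrix (Fin 2) (Fin 2) ℝ := !![1, 0; k, 1] with hP
  set Q : Matrix (Fin 2) (Fin 2) ℝ := !![1, 0; -k, 1] with hQ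
  have hPQ : P * Q = 1 := by
    ext i j
    fin_cases i <;> fin_cases j <;>
      simp [hP, hQ, Matrix.mul_apply, Fin.sum_univ_two]
  have hPdet : P.det = 1 := by simp [hP, Matrix.det_fin_two_of]
  have hPunit : IsUnit P := (Matrix.isUnit_iff_isUnit_det P).mpr (by rw [hPdet]; exact isUnit_one)
  have hPinv : P⁻¹ = Q := Matrix.inv_eq_right_inv hPQ
  have hD : ∀ a b : ℝ, (Matrix.diagonal ![a, b] : Matrix (Fin 2) (Fin 2) ℝ) = !![a, 0; 0, b] := by
    intro a b
    ext i j
    fin_cases i <;> fin_cases j <;> simp [Matrix.diagonal_apply]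
  -- explicit formula for exp (t • M)
  have hexp : ∀ t : ℝ,
      NormedSpace.exp (t • (!![m11, 0; m21, m22] : Matrix (Fin 2) (Fin 2) ℝ)) =
        !![Real.exp (t * m11), 0;
           k * (Real.exp (t * m11) - Real.exp (t * m22)), Real.exp (t * m22)] := by
    intro t
    have hdecomp : t • (!![m11, 0; m21, m22] : Matrix (Fin 2) (Fin 2) ℝ)
        = P * (Matrix.diagonal ![t * m11, t * m22]) * P⁻¹ := by
      rw [hPinv, hD]
      ext i j
      fin_cases i <;> fin_cases j <;>
        (try simp [hP, hQ, Matrix.mul_apply, Fin.sum_univ_two]) <;>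
        (try field_simp [hd']) <;> (try ring) <;>
        (try linear_combination (-(t * m21)) * mul_inv_cancel₀ hd')
    rw [hdecomp, Matrix.exp_conj _ _ hPunit, Matrix.exp_diagonal, hPinv]
    have hpi : NormedSpace.exp (![t * m11, t * m22] : Fin 2 → ℝ)
        = ![Real.exp (t * m11), Real.exp (t * m22)] := by
      rw [Pi.exp_def]
      ext i
      fin_cases i <;> simp [Real.exp_eq_exp_ℝ]
    rw [hpi, hD]
    ext i j
    fin_cases i <;> fin_cases j <;>
      (try simp [hP, hQ, Matrix.mul_apply, Fin.sum_univ_two]) <;> (try ring)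
  have hme : ∀ t : ℝ, Real.exp (-(m11 * t)) * Real.exp (t * m11) = 1 := by
    intro t
    rw [← Real.exp_add]
    have h0 : -(m11 * t) + t * m11 = 0 := by ring
    rw [h0, Real.exp_zero]
  have he : ∀ t : ℝ, Real.exp ((m22 - m11) * t) = Real.exp (t * m22) * Real.exp (-(m11 * t)) := by
    intro t
    rw [← Real.exp_add]
    ring_nf
  have hlim : Tendsto (fun t : ℝ => Real.exp ((m22 - m11) * t)) atTop (nhds 0) := by
    apply Real.tendsto_exp_atBot.comp
    exact Tendsto.const_mul_atTop_of_neg (by linarith) tendsto_id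
  have hfun : (fun t : ℝ => Real.exp (-m11 * t) •
      (NormedSpace.exp (t • (!![m11, 0; m21, m22] : Matrix (Fin 2) (Fin 2) ℝ))).mulVec v)
      = fun t => ![v 0, k * (1 - Real.exp ((m22 - m11) * t)) * v 0
          + Real.exp ((m22 - m11) * t) * v 1] := by
    funext t
    rw [hexp t]
    funext i
    fin_cases i
    · simp [Matrix.mulVec, dotProduct, Fin.sum_univ_two]
      linear_combination (v 0) * hme t
    · simp only [he t]
      simp [Matrix.mulVec, dotProduct, Fin.sum_univ_two]
      linear_combination (k * v 0) * hme t
  constructor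
  · rw [hfun, tendsto_pi_nhds]
    intro i
    fin_cases i
    · simpa using (tendsto_const_nhds : Tendsto (fun _ : ℝ => v 0) atTop (nhds (v 0)))
    · have h2 : Tendsto (fun t : ℝ => k * (1 - Real.exp ((m22 - m11) * t)) * v 0
          + Real.exp ((m22 - m11) * t) * v 1) atTop (nhds (v 0 * k)) := by
        have := ((((tendsto_const_nhds : Tendsto (fun _ : ℝ => (1:ℝ)) atTop (nhds 1)).sub hlim).const_mul k).mul
          (tendsto_const_nhds : Tendsto (fun _ : ℝ => v 0) atTop (nhds (v 0)))).add
          (hlim.mul (tendsto_const_nhds : Tendsto (fun _ : ℝ => v 1) atTop (nhds (v 1))))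
        convert this using 2
        ring
      simpa using h2
  · ext i
    fin_cases i <;>
      (try simp [Matrix.mulVec, dotProduct, Fin.sum_univ_two]) <;>
      (try field_simp) <;> (try ring) <;>
      (try linear_combination (-m21) * mul_inv_cancel₀ hd')
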